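/- Let (Ω,F,ℙ) be a probability space, Z a strictly positive random variable with E[Z] = 1, U a utility function satisfying the standard conditions, Ũ its conjugate, and L a strictly positive random variable with E[Z·L] < ∞. For x > 0 set C(x) = {g : Ω → [0,∞) measurable : E[Z·g] ≤ x} and u(x) = sup_{g ∈ C(x)} E[U(g/L)]. Then for every y > 0 the negative part Ũ⁻(y·L·Z) is ℙ-integrable and E[Ũ(y·L·Z)] = sup_{x>0} [u(x) − x·y] (both sides possibly equal to +∞). -/

import Mathlib

open MeasureTheory Set Filter
open scoped ENNReal NNReal

/-- Generalized expectation `E[W] = E[W⁺] − E[W⁻]` valued in `EReal`, with the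
convention that it equals `⊥` when both parts are infinite. -/
noncomputable def eExp {Ω : Type*} [MeasurableSpace Ω] (P : Measure Ω) (W : Ω → ℝ) : EReal :=
  (∫⁻ ω, ENNReal.ofReal (W ω) ∂P).toEReal - (∫⁻ ω, ENNReal.ofReal (-(W ω)) ∂P).toEReal

/-- The conjugate function `Ũ(y) = sup_{x>0} [U(x) − x·y]`. -/
noncomputable def conj (U : ℝ → ℝ) (y : ℝ) : ℝ := sSup ((fun x => U x - x * y) '' Set.Ioi 0)

/-- The class `C(x)` of (strictly positive) claims affordable from initial wealth `x`:
`g ≥ 0` measurable with `E[Z·g] ≤ x`. -/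
def inC {Ω : Type*} [MeasurableSpace Ω] (P : Measure Ω) (Z : Ω → ℝ) (x : ℝ) (g : Ω → ℝ) : Prop :=
  Measurable g ∧ (∀ ω, 0 < g ω) ∧
    ∫⁻ ω, ENNReal.ofReal (Z ω * g ω) ∂P ≤ ENNReal.ofReal x

/-- The primal value function `u(x) = sup_{g ∈ C(x)} E[U(g/L)]`, valued in `EReal`. -/
noncomputable def uval {Ω : Type*} [MeasurableSpace Ω] (P : Measure Ω) (Z : Ω → ℝ)
    (U : ℝ → ℝ) (L : Ω → ℝ) (x : ℝ) : EReal :=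
  ⨆ g : {g : Ω → ℝ // inC P Z x g}, eExp P (fun ω => U (g.1 ω / L ω))


section Aux
variable {Ω : Type*} [MeasurableSpace Ω] {P : Measure Ω} {f g h b : Ω → ℝ}

lemma ennreal_toEReal_of_ne_top {x : ℝ≥0∞} (hx : x ≠ ⊤) :
    (x : EReal) = ((x.toReal : ℝ) : EReal) := by
  have h1 : (x : EReal) ≠ ⊤ := fun hc => hx (EReal.coe_ennreal_eq_top_iff.1 hc)
  have h2 : (x : EReal) ≠ ⊥ := (EReal.bot_lt_coe_ennreal x).ne'
  rw [← EReal.coe_toReal h1 h2, EReal.toReal_coe_ennreal]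

lemma integrable_of_lintegral_lt_top (hm : Measurable f) (h0 : ∀ ω, 0 ≤ f ω)
    (hf : ∫⁻ ω, ENNReal.ofReal (f ω) ∂P < ⊤) : Integrable f P :=
  ⟨hm.aestronglyMeasurable, (hasFiniteIntegral_iff_ofReal (ae_of_all _ h0)).2 hf⟩

lemma lintegral_ofReal_ne_top_of_integrable (hf : Integrable f P) :
    ∫⁻ ω, ENNReal.ofReal (f ω) ∂P ≠ ⊤ := by
  refine (lt_of_le_of_lt (lintegral_mono fun ω => ?_) hf.2).ne
  rw [← ofReal_norm_eq_enorm]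
  exact ENNReal.ofReal_le_ofReal (le_abs_self _)

lemma lintegral_ofReal_neg_ne_top_of_integrable (hf : Integrable f P) :
    ∫⁻ ω, ENNReal.ofReal (-(f ω)) ∂P ≠ ⊤ :=
  lintegral_ofReal_ne_top_of_integrable hf.neg

lemma eExp_eq_integral (hf : Integrable f P) :
    eExp P f = ((∫ ω, f ω ∂P : ℝ) : EReal) := by
  rw [eExp, integral_eq_lintegral_pos_part_sub_lintegral_neg_part hf, EReal.coe_sub,
    ennreal_toEReal_of_ne_top (lintegral_ofReal_ne_top_of_integrable hf),
    ennreal_toEReal_of_ne_top (lintegral_ofReal_neg_ne_top_of_integrable hf)]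

lemma eExp_nonneg_eq (hf : ∀ ω, 0 ≤ f ω) :
    eExp P f = (∫⁻ ω, ENNReal.ofReal (f ω) ∂P).toEReal := by
  have : ∀ ω, ENNReal.ofReal (-(f ω)) = 0 := fun ω =>
    ENNReal.ofReal_of_nonpos (neg_nonpos.2 (hf ω))
  simp [eExp, this]

lemma eExp_mono (hfg : ∀ ω, f ω ≤ g ω) : eExp P f ≤ eExp P g := by
  refine EReal.sub_le_sub ?_ ?_
  · exact EReal.coe_ennreal_le_coe_ennreal_iff.2 <|
      lintegral_mono fun ω => ENNReal.ofReal_le_ofReal (hfg ω)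
  · exact EReal.coe_ennreal_le_coe_ennreal_iff.2 <|
      lintegral_mono fun ω => ENNReal.ofReal_le_ofReal (neg_le_neg (hfg ω))

lemma eExp_add (hmeas : AEStronglyMeasurable h P)
    (hneg : ∫⁻ ω, ENNReal.ofReal (-(h ω)) ∂P ≠ ⊤) (hb : Integrable b P) :
    eExp P (fun ω => h ω + b ω) = eExp P h + ((∫ ω, b ω ∂P : ℝ) : EReal) := by
  have hbm : AEMeasurable (fun ω => ENNReal.ofReal (-(b ω))) P :=
    (hb.aestronglyMeasurable.aemeasurable.neg).ennreal_ofReal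
  have hbne : ∫⁻ ω, ENNReal.ofReal (-(b ω)) ∂P ≠ ⊤ :=
    lintegral_ofReal_neg_ne_top_of_integrable hb
  by_cases htop : ∫⁻ ω, ENNReal.ofReal (h ω) ∂P = ⊤
  · have key : ∫⁻ ω, ENNReal.ofReal (h ω) ∂P ≤
        ∫⁻ ω, ENNReal.ofReal (h ω + b ω) ∂P + ∫⁻ ω, ENNReal.ofReal (-(b ω)) ∂P := by
      rw [← lintegral_add_right' _ hbm]
      refine lintegral_mono fun ω => ?_
      calc ENNReal.ofReal (h ω) = ENNReal.ofReal ((h ω + b ω) + (-(b ω))) := by ring_nf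
        _ ≤ _ := ENNReal.ofReal_add_le
    have hpos : ∫⁻ ω, ENNReal.ofReal (h ω + b ω) ∂P = ⊤ := by
      by_contra hc
      exact htop.not_lt (key.trans_lt
        (ENNReal.add_lt_top.2 ⟨lt_top_iff_ne_top.2 hc, hbne.lt_top⟩))
    have hneg' : ∫⁻ ω, ENNReal.ofReal (-(h ω + b ω)) ∂P ≠ ⊤ := by
      refine ((le_trans (lintegral_mono fun ω => ?_)
        (le_of_eq (lintegral_add_right' _ hbm))).trans_lt
        (ENNReal.add_lt_top.2 ⟨hneg.lt_top, hbne.lt_top⟩)).ne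
      calc ENNReal.ofReal (-(h ω + b ω)) = ENNReal.ofReal ((-(h ω)) + (-(b ω))) := by ring_nf
        _ ≤ _ := ENNReal.ofReal_add_le
    rw [eExp, eExp, hpos, htop, EReal.coe_ennreal_top,
      ennreal_toEReal_of_ne_top hneg', ennreal_toEReal_of_ne_top hneg,
      EReal.top_sub_coe, EReal.top_sub_coe, EReal.top_add_coe]
  · have hm2 : AEMeasurable (fun ω => ENNReal.ofReal (-(h ω))) P :=
      (hmeas.aemeasurable.neg).ennreal_ofReal
    have hint : Integrable h P := by
      refine ⟨hmeas, ?_⟩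
      rw [hasFiniteIntegral_def]
      calc ∫⁻ ω, (‖h ω‖₊ : ℝ≥0∞) ∂P
          ≤ ∫⁻ ω, (ENNReal.ofReal (h ω) + ENNReal.ofReal (-(h ω))) ∂P := by
            refine lintegral_mono fun ω => ?_
            rcases le_total 0 (h ω) with ht | ht
            · rw [← enorm_eq_nnnorm, ← ofReal_norm_eq_enorm, Real.norm_eq_abs, abs_of_nonneg ht]
              exact le_add_of_le_of_nonneg le_rfl zero_le
            · rw [← enorm_eq_nnnorm, ← ofReal_norm_eq_enorm, Real.norm_eq_abs, abs_of_nonpos ht]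
              exact le_add_of_nonneg_of_le zero_le le_rfl
        _ = ∫⁻ ω, ENNReal.ofReal (h ω) ∂P + ∫⁻ ω, ENNReal.ofReal (-(h ω)) ∂P :=
            lintegral_add_right' _ hm2
        _ < ⊤ := ENNReal.add_lt_top.2 ⟨lt_top_iff_ne_top.2 htop, hneg.lt_top⟩
    have hadd : Integrable (fun ω => h ω + b ω) P := hint.add hb
    rw [eExp_eq_integral hadd, eExp_eq_integral hint, ← EReal.coe_add,
      ← integral_add hint hb]

end Aux

section ConjAux
variable {U : ℝ → ℝ}

lemma diffAt (hsmooth : ContDiffOn ℝ 1 U (Set.Ioi 0)) {a : ℝ} (ha : 0 < a) :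
    DifferentiableAt ℝ U a :=
  (hsmooth.differentiableOn one_ne_zero).differentiableAt (isOpen_Ioi.mem_nhds ha)

lemma tangent_le (hconc : StrictConcaveOn ℝ (Set.Ioi 0) U)
    (hsmooth : ContDiffOn ℝ 1 U (Set.Ioi 0)) {a x : ℝ} (ha : 0 < a) (hx : 0 < x) :
    U x ≤ U a + deriv U a * (x - a) := by
  have hcv : ConvexOn ℝ (Set.Ioi 0) (-U) := hconc.neg.convexOn
  have hda : DifferentiableAt ℝ (-U) a := (diffAt hsmooth ha).neg
  have hderiv : deriv (-U) a = -deriv U a := by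
    rw [show (-U) = fun t => -U t from rfl, deriv.fun_neg]
  rcases lt_trichotomy x a with hlt | heq | hgt
  · have := hcv.slope_le_deriv hx ha hlt hda
    rw [slope_def_field, hderiv] at this
    have h2 : ((-U) a - (-U) x) / (a - x) ≤ -deriv U a := this
    rw [div_le_iff₀ (by linarith)] at h2
    simp only [Pi.neg_apply] at h2
    nlinarith
  · subst heq; simp
  · have := hcv.deriv_le_slope ha hx hgt hda
    rw [slope_def_field, hderiv] at this
    have h2 : -deriv U a ≤ ((-U) x - (-U) a) / (x - a) := this
    rw [le_div_iff₀ (by linarith)] at h2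
    simp only [Pi.neg_apply] at h2
    nlinarith

lemma exists_tangent_pt (hinadaInf : Filter.Tendsto (deriv U) Filter.atTop (nhds 0))
    {q : ℝ} (hq : 0 < q) : ∃ a : ℝ, 0 < a ∧ deriv U a ≤ q := by
  have h1 : ∀ᶠ a in Filter.atTop, deriv U a < q := hinadaInf.eventually_lt_const hq
  rcases (h1.and (Filter.eventually_gt_atTop 0)).exists with ⟨a, h2, h3⟩
  exact ⟨a, h3, h2.le⟩

lemma conj_bddAbove (hconc : StrictConcaveOn ℝ (Set.Ioi 0) U)
    (hsmooth : ContDiffOn ℝ 1 U (Set.Ioi 0))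
    (hinadaInf : Filter.Tendsto (deriv U) Filter.atTop (nhds 0))
    {q : ℝ} (hq : 0 < q) : BddAbove ((fun x => U x - x * q) '' Set.Ioi 0) := by
  obtain ⟨a, ha, hda⟩ := exists_tangent_pt hinadaInf hq
  refine ⟨U a - a * deriv U a, ?_⟩
  rintro v ⟨x, hx, rfl⟩
  have h1 := tangent_le hconc hsmooth ha (Set.mem_Ioi.1 hx)
  show U x - x * q ≤ U a - a * deriv U a
  nlinarith [Set.mem_Ioi.1 hx, mul_nonneg (le_of_lt (Set.mem_Ioi.1 hx)) (sub_nonneg.2 hda)]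

lemma conj_ge (hconc : StrictConcaveOn ℝ (Set.Ioi 0) U)
    (hsmooth : ContDiffOn ℝ 1 U (Set.Ioi 0))
    (hinadaInf : Filter.Tendsto (deriv U) Filter.atTop (nhds 0))
    {q t : ℝ} (hq : 0 < q) (ht : 0 < t) : U t - t * q ≤ conj U q :=
  le_csSup (conj_bddAbove hconc hsmooth hinadaInf hq) ⟨t, ht, rfl⟩

lemma conj_anti (hconc : StrictConcaveOn ℝ (Set.Ioi 0) U)
    (hsmooth : ContDiffOn ℝ 1 U (Set.Ioi 0))
    (hinadaInf : Filter.Tendsto (deriv U) Filter.atTop (nhds 0))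
    {a b : ℝ} (ha : 0 < a) (hab : a ≤ b) : conj U b ≤ conj U a := by
  refine csSup_le ⟨U 1 - 1 * b, ⟨1, Set.mem_Ioi.2 one_pos, rfl⟩⟩ ?_
  rintro v ⟨x, hx, rfl⟩
  have hx0 : (0:ℝ) < x := hx
  show U x - x * b ≤ conj U a
  calc U x - x * b ≤ U x - x * a := by nlinarith
    _ ≤ conj U a := conj_ge hconc hsmooth hinadaInf ha hx0

lemma conj_comp_measurable {Ω : Type*} [MeasurableSpace Ω]
    (hconc : StrictConcaveOn ℝ (Set.Ioi 0) U)
    (hsmooth : ContDiffOn ℝ 1 U (Set.Ioi 0))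
    (hinadaInf : Filter.Tendsto (deriv U) Filter.atTop (nhds 0))
    {W : Ω → ℝ} (hW : Measurable W) (hWpos : ∀ ω, 0 < W ω) :
    Measurable (fun ω => conj U (W ω)) := by
  have hanti : ∀ n : ℕ, Antitone (fun t => conj U (max t (1 / (n + 1 : ℝ)))) := by
    intro n t s hts
    exact conj_anti hconc hsmooth hinadaInf
      (lt_max_of_lt_right (by positivity)) (max_le_max hts le_rfl)
  refine measurable_of_tendsto_metrizable
    (f := fun n ω => conj U (max (W ω) (1 / (n + 1 : ℝ))))
    (fun n => (hanti n).measurable.comp hW) ?_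
  rw [tendsto_pi_nhds]
  intro ω
  refine Filter.Tendsto.congr' ?_ tendsto_const_nhds
  have : ∀ᶠ n : ℕ in Filter.atTop, 1 / (n + 1 : ℝ) ≤ W ω := by
    obtain ⟨N, hN⟩ := exists_nat_one_div_lt (hWpos ω)
    filter_upwards [Filter.eventually_ge_atTop N] with n hn
    exact le_of_lt (lt_of_le_of_lt (by
      apply one_div_le_one_div_of_le <;> [positivity; exact_mod_cast by omega]) hN)
  filter_upwards [this] with n hn
  rw [max_eq_left hn]

end ConjAux

noncomputable def qenum : ℕ → ℚ := fun n => (Denumerable.eqv ℚ).symm n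

noncomputable def rseq : ℕ → ℝ
  | 0 => 1
  | (n+1) => if 0 < ((qenum n : ℚ) : ℝ) then ((qenum n : ℚ) : ℝ) else 1

lemma rseq_pos (n : ℕ) : 0 < rseq n := by
  cases n with
  | zero => exact one_pos
  | succ m =>
    rw [rseq]
    split <;> [assumption; exact one_pos]

lemma rseq_zero : rseq 0 = 1 := rfl

lemma rseq_surj (q : ℚ) (hq : 0 < ((q : ℝ))) : ∃ n, rseq n = (q : ℝ) := by
  refine ⟨(Denumerable.eqv ℚ) q + 1, ?_⟩
  rw [rseq]
  simp only [qenum, Equiv.symm_apply_apply]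
  exact if_pos hq

noncomputable def Fseq (U : ℝ → ℝ) : ℕ → ℝ → ℝ
  | 0 => fun q => U (rseq 0) - rseq 0 * q
  | (n+1) => fun q => max (Fseq U n q) (U (rseq (n+1)) - rseq (n+1) * q)

lemma Fseq_mono (U : ℝ → ℝ) (q : ℝ) : Monotone (fun n => Fseq U n q) :=
  monotone_nat_of_le_succ fun n => le_max_left _ _

lemma Fseq_zero_le (U : ℝ → ℝ) (n : ℕ) (q : ℝ) : U 1 - q ≤ Fseq U n q := by
  have h0 : Fseq U 0 q = U 1 - q := by rw [Fseq, rseq_zero]; ring_nf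
  rw [← h0]; exact Fseq_mono U q (Nat.zero_le n)

lemma Fseq_ge_term (U : ℝ → ℝ) (n : ℕ) (q : ℝ) :
    U (rseq n) - rseq n * q ≤ Fseq U n q := by
  cases n with
  | zero => exact le_of_eq rfl
  | succ m => exact le_max_right _ _

lemma Fseq_measurable (U : ℝ → ℝ) (n : ℕ) : Measurable (Fseq U n) := by
  induction n with
  | zero => exact measurable_const.sub (measurable_id.const_mul _)
  | succ m ih =>
    exact ih.max (measurable_const.sub (measurable_id.const_mul _))

section FseqConj
variable {U : ℝ → ℝ}
  (hconc : StrictConcaveOn ℝ (Set.Ioi 0) U)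
  (hsmooth : ContDiffOn ℝ 1 U (Set.Ioi 0))
  (hinadaInf : Filter.Tendsto (deriv U) Filter.atTop (nhds 0))
include hconc hsmooth hinadaInf

lemma Fseq_le_conj {q : ℝ} (hq : 0 < q) (n : ℕ) : Fseq U n q ≤ conj U q := by
  induction n with
  | zero => exact conj_ge hconc hsmooth hinadaInf hq (rseq_pos 0)
  | succ m ih =>
    exact max_le ih (conj_ge hconc hsmooth hinadaInf hq (rseq_pos (m+1)))

lemma iSup_Fseq {q : ℝ} (hq : 0 < q) : (⨆ n, Fseq U n q) = conj U q := by
  have hbdd : BddAbove (Set.range fun n => Fseq U n q) := by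
    refine ⟨conj U q, ?_⟩
    rintro v ⟨n, rfl⟩
    exact Fseq_le_conj hconc hsmooth hinadaInf hq n
  refine le_antisymm (ciSup_le (Fseq_le_conj hconc hsmooth hinadaInf hq)) ?_
  refine csSup_le ⟨U 1 - 1 * q, ⟨1, Set.mem_Ioi.2 one_pos, rfl⟩⟩ ?_
  rintro v ⟨x, hx, rfl⟩
  have hx0 : (0:ℝ) < x := hx
  show U x - x * q ≤ ⨆ n, Fseq U n q
  refine le_of_forall_pos_le_add fun ε hε => ?_
  have hcont : ContinuousAt (fun t => U t - t * q) x :=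
    ((hsmooth.continuousOn.continuousAt (Ioi_mem_nhds hx0)).sub
      ((continuous_id.mul continuous_const).continuousAt))
  rcases Metric.continuousAt_iff.1 hcont ε hε with ⟨δ, hδ, hball⟩
  set lo : ℝ := max (x - δ/2) (x/2) with hlo
  have hlox : lo < x := max_lt (by linarith) (by linarith)
  obtain ⟨t, hlot, htx⟩ := exists_rat_btwn hlox
  have ht0 : (0:ℝ) < (t:ℝ) :=
    lt_of_lt_of_le (by positivity : (0:ℝ) < x/2) (le_max_right _ _) |>.trans hlot
  obtain ⟨n, hn⟩ := rseq_surj t ht0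
  have hdist : dist (t : ℝ) x < δ := by
    rw [Real.dist_eq, abs_of_nonpos (by linarith)]
    have : x - δ/2 ≤ lo := le_max_left _ _
    linarith
  have := hball hdist
  rw [Real.dist_eq] at this
  have habs : U x - x * q - (U t - t * q) < ε := by
    have := abs_lt.1 this
    linarith [this.1, this.2]
  have hFn : U (t:ℝ) - (t:ℝ) * q ≤ Fseq U n q := hn ▸ Fseq_ge_term U n q
  have hsup : Fseq U n q ≤ ⨆ m, Fseq U m q := le_ciSup hbdd n
  linarith

end FseqConj

noncomputable def selSeq {Ω : Type*} (U : ℝ → ℝ) (W : Ω → ℝ) : ℕ → Ω → ℝ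
  | 0 => fun _ => 1
  | (n+1) => fun ω =>
      if Fseq U n (W ω) < U (rseq (n+1)) - rseq (n+1) * W ω then rseq (n+1)
      else selSeq U W n ω

noncomputable def Rmax : ℕ → ℝ
  | 0 => 1
  | (n+1) => max (Rmax n) (rseq (n+1))

section Sel
variable {Ω : Type*} {U : ℝ → ℝ} {W : Ω → ℝ}

lemma sel_spec (n : ℕ) (ω : Ω) :
    U (selSeq U W n ω) - selSeq U W n ω * W ω = Fseq U n (W ω) := by
  induction n with
  | zero => rw [selSeq, Fseq, rseq_zero]
  | succ m ih =>
    rw [selSeq, Fseq]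
    simp only []
    by_cases hc : Fseq U m (W ω) < U (rseq (m+1)) - rseq (m+1) * W ω
    · rw [if_pos hc, max_eq_right hc.le]
    · rw [if_neg hc, ih, max_eq_left (not_lt.1 hc)]

lemma sel_pos (n : ℕ) (ω : Ω) : 0 < selSeq U W n ω := by
  induction n with
  | zero => exact one_pos
  | succ m ih =>
    rw [selSeq]
    simp only []
    split <;> [exact rseq_pos _; exact ih]

lemma sel_le_Rmax (n : ℕ) (ω : Ω) : selSeq U W n ω ≤ Rmax n := by
  induction n with
  | zero => exact le_refl 1
  | succ m ih =>
    rw [selSeq, Rmax]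
    simp only []
    split
    · exact le_max_right _ _
    · exact le_trans ih (le_max_left _ _)

lemma sel_measurable [MeasurableSpace Ω] (hW : Measurable W) (n : ℕ) :
    Measurable (selSeq U W n) := by
  induction n with
  | zero => exact measurable_const
  | succ m ih =>
    rw [selSeq]
    refine Measurable.ite ?_ measurable_const ih
    exact measurableSet_lt ((Fseq_measurable U m).comp hW)
      (measurable_const.sub (hW.const_mul _))

end Sel

lemma Rmax_pos (n : ℕ) : 0 < Rmax n := by
  induction n with
  | zero => exact one_pos
  | succ m ih => exact lt_max_of_lt_left ih

theorem stmt11 {Ω : Type*} [MeasurableSpace Ω] (P : Measure Ω) [IsProbabilityMeasure P]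
    (Z : Ω → ℝ) (hZmeas : Measurable Z) (hZpos : ∀ ω, 0 < Z ω)
    (hZint : Integrable Z P) (hZ1 : ∫ ω, Z ω ∂P = 1)
    (U : ℝ → ℝ)
    (hmono : StrictMonoOn U (Set.Ioi 0))
    (hconc : StrictConcaveOn ℝ (Set.Ioi 0) U)
    (hsmooth : ContDiffOn ℝ 1 U (Set.Ioi 0))
    (hinada0 : Filter.Tendsto (deriv U) (nhdsWithin 0 (Set.Ioi 0)) Filter.atTop)
    (hinadaInf : Filter.Tendsto (deriv U) Filter.atTop (nhds 0))
    (L : Ω → ℝ) (hLmeas : Measurable L) (hLpos : ∀ ω, 0 < L ω)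
    (hLint : ∫⁻ ω, ENNReal.ofReal (Z ω * L ω) ∂P < ⊤)
    (y : ℝ) (hy : 0 < y) :
    Integrable (fun ω => max (-(conj U (y * L ω * Z ω))) 0) P ∧
    eExp P (fun ω => conj U (y * L ω * Z ω)) =
      ⨆ x : {x : ℝ // 0 < x}, (uval P Z U L x.1 - ((x.1 * y : ℝ) : EReal)) := by
  classical
  set W : Ω → ℝ := fun ω => y * L ω * Z ω with hWdef
  have hWmeas : Measurable W := (measurable_const.mul hLmeas).mul hZmeas
  have hWpos : ∀ ω, 0 < W ω := fun ω => mul_pos (mul_pos hy (hLpos ω)) (hZpos ω)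
  have hZLmeas : Measurable (fun ω => Z ω * L ω) := hZmeas.mul hLmeas
  have hZL_int : Integrable (fun ω => Z ω * L ω) P :=
    integrable_of_lintegral_lt_top hZLmeas
      (fun ω => le_of_lt (mul_pos (hZpos ω) (hLpos ω))) hLint
  have hW_int : Integrable W P := by
    have hWeq : W = fun ω => y * (Z ω * L ω) := funext fun ω => by show y * L ω * Z ω = _; ring
    rw [hWeq]; exact hZL_int.const_mul y
  set B : Ω → ℝ := fun ω => conj U (W ω) with hBdef
  have hBmeas : Measurable B := conj_comp_measurable hconc hsmooth hinadaInf hWmeas hWpos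
  have hB_lb : ∀ ω, U 1 - W ω ≤ B ω := fun ω => by
    have h := conj_ge hconc hsmooth hinadaInf (hWpos ω) one_pos
    rw [one_mul] at h; exact h
  have hbound_int : Integrable (fun ω => |U 1| + W ω) P := (integrable_const _).add hW_int
  have key1 : Integrable (fun ω => max (-(B ω)) 0) P := by
    refine hbound_int.mono' ((hBmeas.neg.max measurable_const).aestronglyMeasurable)
      (ae_of_all _ fun ω => ?_)
    rw [Real.norm_eq_abs, abs_of_nonneg (le_max_right _ _)]
    have h1 := hB_lb ω
    have h2 := hWpos ω
    have h3 : -(U 1) ≤ |U 1| := neg_le_abs _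
    refine max_le (by linarith) (by positivity)
  have hBneg_ne : ∫⁻ ω, ENNReal.ofReal (-(B ω)) ∂P ≠ ⊤ := by
    refine ne_top_of_le_ne_top (lintegral_ofReal_ne_top_of_integrable key1)
      (lintegral_mono fun ω => ENNReal.ofReal_le_ofReal (le_max_left _ _))
  refine ⟨key1, le_antisymm ?_ ?_⟩
  · -- hard direction: eExp B ≤ RHS
    set RHS := ⨆ x : {x : ℝ // 0 < x}, (uval P Z U L x.1 - ((x.1 * y : ℝ) : EReal)) with hRHS
    set f0 : Ω → ℝ := fun ω => U 1 - W ω with hf0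
    have hf0_meas : Measurable f0 := measurable_const.sub hWmeas
    have hf0_int : Integrable f0 P := (integrable_const (U 1)).sub hW_int
    set c : ℝ := ∫ ω, f0 ω ∂P with hc
    set fn : ℕ → Ω → ℝ := fun n ω => Fseq U n (W ω) with hfndef
    have hfn_meas : ∀ n, Measurable (fn n) := fun n => (Fseq_measurable U n).comp hWmeas
    have hf0_le_fn : ∀ n ω, f0 ω ≤ fn n ω := fun n ω => Fseq_zero_le U n (W ω)
    have hfn_le_B : ∀ n ω, fn n ω ≤ B ω := fun n ω =>
      Fseq_le_conj hconc hsmooth hinadaInf (hWpos ω) n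
    have hfn_neg_ne : ∀ n, ∫⁻ ω, ENNReal.ofReal (-(fn n ω)) ∂P ≠ ⊤ := by
      intro n
      refine ne_top_of_le_ne_top (lintegral_ofReal_ne_top_of_integrable hbound_int)
        (lintegral_mono fun ω => ENNReal.ofReal_le_ofReal ?_)
      have h1 := hf0_le_fn n ω
      have h2 : -(U 1) ≤ |U 1| := neg_le_abs _
      have h3 : f0 ω = U 1 - W ω := rfl
      linarith [h3 ▸ h1]
    set an : ℕ → ℝ≥0∞ := fun n => ∫⁻ ω, ENNReal.ofReal (fn n ω - f0 ω) ∂P with han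
    have hdecomp : ∀ (h : Ω → ℝ), Measurable h → (∀ ω, f0 ω ≤ h ω) →
        eExp P h = (∫⁻ ω, ENNReal.ofReal (h ω - f0 ω) ∂P).toEReal + (c : EReal) := by
      intro h hhm hle
      have h1 : h = fun ω => (h ω - f0 ω) + f0 ω := funext fun ω => by ring
      have hneg : ∫⁻ ω, ENNReal.ofReal (-(h ω - f0 ω)) ∂P ≠ ⊤ := by
        have hz : ∀ ω, ENNReal.ofReal (-(h ω - f0 ω)) = 0 := fun ω =>
          ENNReal.ofReal_of_nonpos (by linarith [hle ω])
        have h0 : (∫⁻ ω, ENNReal.ofReal (-(h ω - f0 ω)) ∂P) = 0 := by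
          simp only [hz, lintegral_zero]
        rw [h0]
        exact ENNReal.zero_ne_top
      calc eExp P h = eExp P (fun ω => (h ω - f0 ω) + f0 ω) := by rw [← h1]
        _ = eExp P (fun ω => h ω - f0 ω) + (c : EReal) :=
            eExp_add ((hhm.sub hf0_meas).aestronglyMeasurable) hneg hf0_int
        _ = _ := by rw [eExp_nonneg_eq (fun ω => sub_nonneg.2 (hle ω))]
    have hstep : ∀ n, ((an n : EReal)) + (c : EReal) ≤ RHS := by
      intro n
      set sn : Ω → ℝ := selSeq U W n with hsndef
      have hsn_meas : Measurable sn := sel_measurable hWmeas n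
      set gn : Ω → ℝ := fun ω => L ω * sn ω with hgndef
      have hgn_meas : Measurable gn := hLmeas.mul hsn_meas
      have hgn_pos : ∀ ω, 0 < gn ω := fun ω => mul_pos (hLpos ω) (sel_pos n ω)
      have hZgn_nonneg : ∀ ω, 0 ≤ Z ω * gn ω := fun ω =>
        le_of_lt (mul_pos (hZpos ω) (hgn_pos ω))
      have hZgn_lt : ∫⁻ ω, ENNReal.ofReal (Z ω * gn ω) ∂P < ⊤ := by
        calc ∫⁻ ω, ENNReal.ofReal (Z ω * gn ω) ∂P
            ≤ ∫⁻ ω, ENNReal.ofReal (Rmax n) * ENNReal.ofReal (Z ω * L ω) ∂P := by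
              refine lintegral_mono fun ω => ?_
              rw [← ENNReal.ofReal_mul (le_of_lt (Rmax_pos n))]
              refine ENNReal.ofReal_le_ofReal ?_
              have h1 := sel_le_Rmax (U := U) (W := W) n ω
              have h2 : 0 ≤ Z ω * L ω := le_of_lt (mul_pos (hZpos ω) (hLpos ω))
              have h3 : Z ω * gn ω = sn ω * (Z ω * L ω) := by rw [hgndef]; ring
              rw [h3]
              exact mul_le_mul_of_nonneg_right h1 h2
          _ = ENNReal.ofReal (Rmax n) * ∫⁻ ω, ENNReal.ofReal (Z ω * L ω) ∂P :=
              lintegral_const_mul' _ _ ENNReal.ofReal_ne_top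
          _ < ⊤ := ENNReal.mul_lt_top ENNReal.ofReal_lt_top hLint
      have hZgn_int : Integrable (fun ω => Z ω * gn ω) P :=
        integrable_of_lintegral_lt_top (hZmeas.mul hgn_meas) hZgn_nonneg hZgn_lt
      set xn : ℝ := ∫ ω, Z ω * gn ω ∂P with hxn
      have hxn_pos : 0 < xn := by
        rw [hxn, integral_pos_iff_support_of_nonneg hZgn_nonneg hZgn_int]
        have hsupp : Function.support (fun ω => Z ω * gn ω) = Set.univ :=
          Set.eq_univ_of_forall fun ω => ne_of_gt (mul_pos (hZpos ω) (hgn_pos ω))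
        rw [hsupp, measure_univ]
        exact zero_lt_one
      have hofReal_xn : ENNReal.ofReal xn = ∫⁻ ω, ENNReal.ofReal (Z ω * gn ω) ∂P :=
        ofReal_integral_eq_lintegral_ofReal hZgn_int (ae_of_all _ hZgn_nonneg)
      have hinCn : inC P Z xn gn := ⟨hgn_meas, hgn_pos, le_of_eq hofReal_xn.symm⟩
      have hbn_int : Integrable (fun ω => y * (Z ω * gn ω)) P := hZgn_int.const_mul y
      have hfn_eq : (fun ω => U (gn ω / L ω)) = fun ω => fn n ω + y * (Z ω * gn ω) := by
        funext ω
        have hgL : gn ω / L ω = sn ω := by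
          rw [hgndef]; exact mul_div_cancel_left₀ _ (hLpos ω).ne'
        rw [hgL]
        have hspec := sel_spec (U := U) (W := W) n ω
        have harr : sn ω * W ω = y * (Z ω * gn ω) := by
          show sn ω * (y * L ω * Z ω) = y * (Z ω * (L ω * sn ω)); ring
        have hfnω : fn n ω = Fseq U n (W ω) := rfl
        rw [hfnω, ← hspec, ← harr]
        ring
      have heq1 : eExp P (fun ω => U (gn ω / L ω)) = eExp P (fn n) + ((y * xn : ℝ) : EReal) := by
        rw [hfn_eq, eExp_add (hfn_meas n).aestronglyMeasurable (hfn_neg_ne n) hbn_int,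
          integral_const_mul]
      have hdn : eExp P (fn n) = ((an n : EReal)) + (c : EReal) :=
        hdecomp (fn n) (hfn_meas n) (hf0_le_fn n)
      have h3 : eExp P (fun ω => U (gn ω / L ω)) ≤ uval P Z U L xn :=
        le_iSup (fun g : {g : Ω → ℝ // inC P Z xn g} =>
          eExp P (fun ω => U (g.1 ω / L ω))) ⟨gn, hinCn⟩
      have h2 : eExp P (fn n) ≤ uval P Z U L xn - ((xn * y : ℝ) : EReal) := by
        calc eExp P (fn n) = (eExp P (fn n) + ((y * xn : ℝ) : EReal)) - ((y * xn : ℝ) : EReal) :=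
              (EReal.add_sub_cancel_right).symm
          _ = eExp P (fun ω => U (gn ω / L ω)) - ((y * xn : ℝ) : EReal) := by rw [heq1]
          _ ≤ uval P Z U L xn - ((xn * y : ℝ) : EReal) :=
              EReal.sub_le_sub h3 (le_of_eq (by rw [mul_comm]))
      calc ((an n : EReal)) + (c : EReal) = eExp P (fn n) := hdn.symm
        _ ≤ uval P Z U L xn - ((xn * y : ℝ) : EReal) := h2
        _ ≤ RHS := le_iSup (fun x : {x : ℝ // 0 < x} =>
            uval P Z U L x.1 - ((x.1 * y : ℝ) : EReal)) ⟨xn, hxn_pos⟩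
    have hmono_an : Monotone an := fun n m hnm => lintegral_mono fun ω =>
      ENNReal.ofReal_le_ofReal (sub_le_sub_right (Fseq_mono U (W ω) hnm) _)
    have hsup : ∫⁻ ω, ENNReal.ofReal (B ω - f0 ω) ∂P = ⨆ n, an n := by
      have hmono_fn : Monotone (fun n => fun ω => ENNReal.ofReal (fn n ω - f0 ω)) :=
        fun n m hnm ω => ENNReal.ofReal_le_ofReal (sub_le_sub_right (Fseq_mono U (W ω) hnm) _)
      calc ∫⁻ ω, ENNReal.ofReal (B ω - f0 ω) ∂P
          = ∫⁻ ω, ⨆ n, ENNReal.ofReal (fn n ω - f0 ω) ∂P := by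
            congr 1
            funext ω
            have hbdd : BddAbove (Set.range fun n => Fseq U n (W ω)) :=
              ⟨conj U (W ω), by rintro v ⟨n, rfl⟩; exact hfn_le_B n ω⟩
            have ht1 : Filter.Tendsto (fun n => Fseq U n (W ω)) Filter.atTop (nhds (B ω)) := by
              have h := tendsto_atTop_ciSup (Fseq_mono U (W ω)) hbdd
              rwa [iSup_Fseq hconc hsmooth hinadaInf (hWpos ω)] at h
            have ht2 : Filter.Tendsto (fun n => ENNReal.ofReal (fn n ω - f0 ω)) Filter.atTop
                (nhds (ENNReal.ofReal (B ω - f0 ω))) :=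
              (ENNReal.continuous_ofReal.tendsto _).comp (ht1.sub_const (f0 ω))
            exact (tendsto_nhds_unique (tendsto_atTop_iSup fun n m hnm =>
              ENNReal.ofReal_le_ofReal (sub_le_sub_right (Fseq_mono U (W ω) hnm) _)) ht2).symm
        _ = ⨆ n, an n := lintegral_iSup
            (fun n => ((hfn_meas n).sub hf0_meas).ennreal_ofReal) hmono_fn
    rw [hdecomp B hBmeas (fun ω => hB_lb ω), hsup]
    have hterm : ∀ n, ((an n : EReal)) ≤ RHS - (c : EReal) := fun n =>
      (EReal.le_sub_iff_add_le (Or.inl (EReal.coe_ne_bot c))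
        (Or.inl (EReal.coe_ne_top c))).2 (hstep n)
    have hlim : (((⨆ n, an n : ℝ≥0∞)) : EReal) ≤ RHS - (c : EReal) :=
      le_of_tendsto (EReal.tendsto_coe_ennreal.2 (tendsto_atTop_iSup hmono_an))
        (Filter.Eventually.of_forall hterm)
    exact (EReal.le_sub_iff_add_le (Or.inl (EReal.coe_ne_bot c))
      (Or.inl (EReal.coe_ne_top c))).1 hlim
  · -- easy direction: RHS ≤ eExp B
    refine iSup_le ?_
    rintro ⟨x, hx⟩
    show uval P Z U L x - ((x * y : ℝ) : EReal) ≤ eExp P B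
    rw [EReal.sub_le_iff_le_add (Or.inl (EReal.coe_ne_bot _)) (Or.inl (EReal.coe_ne_top _))]
    rw [uval]
    refine iSup_le ?_
    rintro ⟨g, hgmeas, hgpos, hglint⟩
    have hZg_int : Integrable (fun ω => Z ω * g ω) P :=
      integrable_of_lintegral_lt_top (hZmeas.mul hgmeas)
        (fun ω => le_of_lt (mul_pos (hZpos ω) (hgpos ω)))
        (lt_of_le_of_lt hglint ENNReal.ofReal_lt_top)
    have hb_int : Integrable (fun ω => y * (Z ω * g ω)) P := hZg_int.const_mul y
    have hpt : ∀ ω, U (g ω / L ω) ≤ B ω + y * (Z ω * g ω) := by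
      intro ω
      have ht : 0 < g ω / L ω := div_pos (hgpos ω) (hLpos ω)
      have h1 := conj_ge hconc hsmooth hinadaInf (hWpos ω) ht
      have h2 : g ω / L ω * W ω = y * (Z ω * g ω) := by
        show g ω / L ω * (y * L ω * Z ω) = _
        rw [div_mul_eq_mul_div, div_eq_iff (hLpos ω).ne']
        ring
      rw [h2] at h1
      linarith
    have hZg_le : ∫ ω, Z ω * g ω ∂P ≤ x := by
      rw [integral_eq_lintegral_of_nonneg_ae
        (ae_of_all _ fun ω => le_of_lt (mul_pos (hZpos ω) (hgpos ω)))
        (hZmeas.mul hgmeas).aestronglyMeasurable]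
      calc (∫⁻ ω, ENNReal.ofReal (Z ω * g ω) ∂P).toReal
          ≤ (ENNReal.ofReal x).toReal := ENNReal.toReal_mono ENNReal.ofReal_ne_top hglint
        _ = x := ENNReal.toReal_ofReal hx.le
    calc eExp P (fun ω => U (g ω / L ω))
        ≤ eExp P (fun ω => B ω + y * (Z ω * g ω)) := eExp_mono hpt
      _ = eExp P B + ((∫ ω, y * (Z ω * g ω) ∂P : ℝ) : EReal) :=
          eExp_add hBmeas.aestronglyMeasurable hBneg_ne hb_int
      _ ≤ eExp P B + ((x * y : ℝ) : EReal) := by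
          refine add_le_add_right (EReal.coe_le_coe_iff.2 ?_) _
          rw [integral_const_mul]
          calc y * ∫ ω, Z ω * g ω ∂P ≤ y * x := by nlinarith
            _ = x * y := mul_comm _ _
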